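/- (Greedy clinching for the single-keyword AdWords polytope) Let α₁ ≥ ... ≥ α_n ≥ 0 and P = {x ≥ 0 : x(S) ≤ ∑_{j=1}^{|S|} α_j ∀S}. Given ρ ∈ P and d ≥ 0, assume coordinates sorted so ρ₁+d₁ ≥ ... ≥ ρ_n+d_n, and define z_i = min{ρ_i + d_i, ∑_{j=1}^i α_j − ∑_{j=1}^{i−1} z_j} inductively. Then ∑_i z_i − ∑_i ρ_i equals max{∑_i x_i : x + ρ ∈ P, 0 ≤ x ≤ d}. -/
import Mathlib

open Finset

private lemma filt_succ {n : ℕ} (k : ℕ) (hk : k < n) :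
    (Finset.univ.filter (fun j : Fin n => (j : ℕ) < k + 1)) =
      insert ⟨k, hk⟩ (Finset.univ.filter (fun j : Fin n => (j : ℕ) < k)) := by
  ext j
  simp only [mem_filter, mem_univ, true_and, mem_insert, Fin.ext_iff]
  omega

private lemma filt_full {n : ℕ} {k : ℕ} (hk : n ≤ k) :
    (Finset.univ.filter (fun j : Fin n => (j : ℕ) < k)) = Finset.univ := by
  ext j
  simp only [mem_filter, mem_univ, true_and, iff_true]
  exact lt_of_lt_of_le j.isLt hk

private lemma filt_card {n : ℕ} : ∀ (k : ℕ), k ≤ n →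
    (Finset.univ.filter (fun j : Fin n => (j : ℕ) < k)).card = k := by
  intro k
  induction k with
  | zero => intro _; simp
  | succ k ih =>
    intro hk
    rw [filt_succ k hk, card_insert_of_notMem (by simp), ih (le_of_lt hk)]

theorem greedy_clinching_adwords (n : ℕ) (α : Fin n → ℝ)
    (hα0 : ∀ j, 0 ≤ α j)
    (hαmono : ∀ i j : Fin n, i ≤ j → α j ≤ α i)
    (ρ : Fin n → ℝ) (hρ0 : ∀ i, 0 ≤ ρ i)
    (hρP : ∀ S : Finset (Fin n), ∑ i ∈ S, ρ i ≤
      ∑ j ∈ Finset.univ.filter (fun j : Fin n => (j : ℕ) < S.card), α j)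
    (d : Fin n → ℝ) (hd : ∀ i, 0 ≤ d i)
    (hsorted : ∀ i j : Fin n, i ≤ j → ρ j + d j ≤ ρ i + d i)
    (z : Fin n → ℝ)
    (hz : ∀ i : Fin n, z i = min (ρ i + d i)
      ((∑ j ∈ Finset.univ.filter (fun j : Fin n => (j : ℕ) ≤ (i : ℕ)), α j)
        - ∑ j ∈ Finset.univ.filter (fun j : Fin n => (j : ℕ) < (i : ℕ)), z j)) :
    IsGreatest
      {s : ℝ | ∃ x : Fin n → ℝ,
        (∀ i, 0 ≤ x i ∧ x i ≤ d i) ∧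
        (∀ S : Finset (Fin n), ∑ i ∈ S, (ρ i + x i) ≤
          ∑ j ∈ Finset.univ.filter (fun j : Fin n => (j : ℕ) < S.card), α j) ∧
        s = ∑ i, x i}
      (∑ i, z i - ∑ i, ρ i) := by
  classical
  set c : Fin n → ℝ := fun i => ρ i + d i with hc
  set A : ℕ → ℝ := fun k => ∑ j ∈ Finset.univ.filter (fun j : Fin n => (j : ℕ) < k), α j with hA
  set Z : ℕ → ℝ := fun k => ∑ j ∈ Finset.univ.filter (fun j : Fin n => (j : ℕ) < k), z j with hZ
  have hAstep : ∀ (k : ℕ) (hk : k < n), A (k + 1) = A k + α ⟨k, hk⟩ := by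
    intro k hk
    simp only [hA]
    rw [filt_succ k hk, sum_insert (by simp)]
    ring
  have hZstep : ∀ (k : ℕ) (hk : k < n), Z (k + 1) = Z k + z ⟨k, hk⟩ := by
    intro k hk
    simp only [hZ]
    rw [filt_succ k hk, sum_insert (by simp)]
    ring
  have hzmin : ∀ i : Fin n, z i = min (c i) (A ((i : ℕ) + 1) - Z (i : ℕ)) := by
    intro i
    rw [hz i]
    have h1 : (Finset.univ.filter (fun j : Fin n => (j : ℕ) ≤ (i : ℕ)))
        = Finset.univ.filter (fun j : Fin n => (j : ℕ) < (i : ℕ) + 1) := by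
      ext j; simp only [mem_filter, mem_univ, true_and]; omega
    rw [h1]
  have hzlec : ∀ i, z i ≤ c i := by
    intro i; rw [hzmin i]; exact min_le_left _ _
  have hzleA : ∀ i : Fin n, z i ≤ A ((i : ℕ) + 1) - Z (i : ℕ) := by
    intro i; rw [hzmin i]; exact min_le_right _ _
  have hstepmono : ∀ a b : ℕ, a ≤ b → A (b + 1) - A b ≤ A (a + 1) - A a := by
    intro a b hab
    have hnn : ∀ (a : ℕ), 0 ≤ A (a + 1) - A a := by
      intro a
      by_cases ha : a < n
      · rw [hAstep a ha]; linarith [hα0 ⟨a, ha⟩]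
      · push_neg at ha
        have : A (a + 1) = A a := by
          simp only [hA]
          rw [filt_full ha, filt_full (le_trans ha (Nat.le_succ a))]
        rw [this]; linarith
    by_cases hb : b < n
    · have ha : a < n := lt_of_le_of_lt hab hb
      rw [hAstep b hb, hAstep a ha]
      have := hαmono ⟨a, ha⟩ ⟨b, hb⟩ (by exact hab)
      linarith
    · push_neg at hb
      have hb1 : A (b + 1) = A b := by
        simp only [hA]
        rw [filt_full hb, filt_full (le_trans hb (Nat.le_succ b))]
      rw [hb1]
      have := hnn a
      linarith
  have hshift : ∀ (m a b : ℕ), a ≤ b → A (b + m) - A b ≤ A (a + m) - A a := by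
    intro m
    induction m with
    | zero => intro a b _; simp
    | succ m ih =>
      intro a b hab
      have h1 := ih a b hab
      have h2 := hstepmono (a + m) (b + m) (by omega)
      show A ((b + m) + 1) - A b ≤ A ((a + m) + 1) - A a
      linarith
  have hsubmod : ∀ S T : Finset (Fin n),
      A ((S ∪ T).card) + A ((S ∩ T).card) ≤ A S.card + A T.card := by
    intro S T
    have hkey := Finset.card_union_add_card_inter S T
    have h1 : (S ∩ T).card ≤ S.card := card_le_card inter_subset_left
    have h2 : S.card ≤ (S ∪ T).card := card_le_card subset_union_left
    have h3 : (S ∪ T).card = S.card + (T.card - (S ∩ T).card) := by omega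
    have h4 : T.card = (S ∩ T).card + (T.card - (S ∩ T).card) := by omega
    have h5 := hshift (T.card - (S ∩ T).card) (S ∩ T).card S.card h1
    rw [← h3, ← h4] at h5
    linarith
  have hZA : ∀ k, k ≤ n → Z k ≤ A k := by
    intro k
    induction k with
    | zero => intro _; simp [hZ, hA]
    | succ k ih =>
      intro hk
      have hkn : k < n := hk
      have h1 := hzleA ⟨k, hkn⟩
      rw [hZstep k hkn]
      simp only at h1
      linarith
  have hZtail : ∀ t, t ≤ n →
      Z n ≤ A t + ∑ j ∈ Finset.univ.filter (fun j : Fin n => t ≤ (j : ℕ)), c j := by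
    intro t ht
    have hsplit : Z n = Z t + ∑ j ∈ Finset.univ.filter (fun j : Fin n => ¬ ((j : ℕ) < t)), z j := by
      simp only [hZ]
      rw [filt_full (le_refl n),
        ← Finset.sum_filter_add_sum_filter_not Finset.univ (fun j : Fin n => (j : ℕ) < t) z]
    have hfe : (Finset.univ.filter (fun j : Fin n => ¬ ((j : ℕ) < t)))
        = Finset.univ.filter (fun j : Fin n => t ≤ (j : ℕ)) := by
      ext j; simp only [mem_filter, mem_univ, true_and]; omega
    rw [hfe] at hsplit
    have h2 : ∑ j ∈ Finset.univ.filter (fun j : Fin n => t ≤ (j : ℕ)), z j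
        ≤ ∑ j ∈ Finset.univ.filter (fun j : Fin n => t ≤ (j : ℕ)), c j :=
      Finset.sum_le_sum fun j _ => hzlec j
    have h3 := hZA t ht
    linarith
  -- upper bound
  have hub : ∀ x : Fin n → ℝ, (∀ i, 0 ≤ x i ∧ x i ≤ d i) →
      (∀ S : Finset (Fin n), ∑ i ∈ S, (ρ i + x i) ≤ A S.card) →
      ∑ i, (ρ i + x i) ≤ Z n := by
    intro x hxb hxS
    have key : ∀ k, k ≤ n →
        ∑ j ∈ Finset.univ.filter (fun j : Fin n => (j : ℕ) < k), (ρ j + x j) ≤ Z k := by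
      intro k
      induction k with
      | zero => intro _; simp [hZ]
      | succ k ih =>
        intro hk
        have hkn : k < n := hk
        have hsum : ∑ j ∈ Finset.univ.filter (fun j : Fin n => (j : ℕ) < k + 1), (ρ j + x j)
            = ∑ j ∈ Finset.univ.filter (fun j : Fin n => (j : ℕ) < k), (ρ j + x j)
              + (ρ ⟨k, hkn⟩ + x ⟨k, hkn⟩) := by
          rw [filt_succ k hkn, sum_insert (by simp)]; ring
        have h1 : ∑ j ∈ Finset.univ.filter (fun j : Fin n => (j : ℕ) < k + 1), (ρ j + x j)
            ≤ A (k + 1) := by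
          have := hxS (Finset.univ.filter (fun j : Fin n => (j : ℕ) < k + 1))
          rwa [filt_card (k + 1) hk] at this
        have h2 := ih (le_of_lt hkn)
        have h3 : x ⟨k, hkn⟩ ≤ d ⟨k, hkn⟩ := (hxb ⟨k, hkn⟩).2
        have h4 := hzmin ⟨k, hkn⟩
        simp only at h4
        rw [hZstep k hkn]
        rcases le_total (c ⟨k, hkn⟩) (A (k + 1) - Z k) with h | h
        · rw [min_eq_left h] at h4
          have : c ⟨k, hkn⟩ = ρ ⟨k, hkn⟩ + d ⟨k, hkn⟩ := rfl
          rw [hsum, h4]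
          linarith
        · rw [min_eq_right h] at h4
          rw [h4]
          linarith
    have := key n le_rfl
    rwa [filt_full le_rfl] at this
  -- feasible set and maximizer
  set F : Set (Fin n → ℝ) := {x | (∀ i, 0 ≤ x i ∧ x i ≤ d i) ∧
      ∀ S : Finset (Fin n), ∑ i ∈ S, (ρ i + x i) ≤ A S.card} with hF
  have hF0 : (0 : Fin n → ℝ) ∈ F := by
    constructor
    · intro i; exact ⟨le_refl _, hd i⟩
    · intro S
      have := hρP S
      simpa using this
  have hFclosed : IsClosed F := by
    have hFeq : F = (⋂ i : Fin n, {x : Fin n → ℝ | 0 ≤ x i}) ∩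
        ((⋂ i : Fin n, {x : Fin n → ℝ | x i ≤ d i}) ∩
        (⋂ S : Finset (Fin n), {x : Fin n → ℝ | ∑ i ∈ S, (ρ i + x i) ≤ A S.card})) := by
      ext x
      simp only [hF, Set.mem_setOf_eq, Set.mem_inter_iff, Set.mem_iInter, forall_and]
      tauto
    rw [hFeq]
    refine IsClosed.inter (isClosed_iInter fun i => ?_)
      (IsClosed.inter (isClosed_iInter fun i => ?_) (isClosed_iInter fun S => ?_))
    · exact isClosed_le continuous_const (continuous_apply i)
    · exact isClosed_le (continuous_apply i) continuous_const
    · exact isClosed_le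
        (continuous_finset_sum S fun i _ => continuous_const.add (continuous_apply i))
        continuous_const
  have hFcpt : IsCompact F := by
    refine IsCompact.of_isClosed_subset (isCompact_Icc (a := (0 : Fin n → ℝ)) (b := d)) hFclosed ?_
    intro x hx
    rw [Set.mem_Icc]
    exact ⟨fun i => (hx.1 i).1, fun i => (hx.1 i).2⟩
  obtain ⟨x, hxF, hxmax⟩ := hFcpt.exists_isMaxOn ⟨0, hF0⟩
    ((continuous_finset_sum Finset.univ (fun i _ => continuous_apply i)).continuousOn :
      ContinuousOn (fun x : Fin n → ℝ => ∑ i, x i) F)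
  set y : Fin n → ℝ := fun i => ρ i + x i with hy
  have hyfeas : ∀ S : Finset (Fin n), ∑ i ∈ S, y i ≤ A S.card := hxF.2
  -- tight sets
  set 𝒯 : Finset (Finset (Fin n)) :=
    Finset.univ.filter (fun S : Finset (Fin n) => ∑ i ∈ S, y i = A S.card) with h𝒯
  set T : Finset (Fin n) := 𝒯.sup id with hT
  have hTtight : ∑ i ∈ T, y i = A T.card := by
    rw [hT]
    refine Finset.sup_induction (p := fun (S : Finset (Fin n)) => ∑ i ∈ S, y i = A S.card) ?_ ?_ ?_
    · show ∑ i ∈ (⊥ : Finset (Fin n)), y i = A (⊥ : Finset (Fin n)).card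
      simp [hA]
    · intro S1 hS1 S2 hS2
      have h5 := hsubmod S1 S2
      have h6 : ∑ i ∈ S1 ∪ S2, y i + ∑ i ∈ S1 ∩ S2, y i = ∑ i ∈ S1, y i + ∑ i ∈ S2, y i :=
        Finset.sum_union_inter
      have h7 := hyfeas (S1 ∪ S2)
      have h8 := hyfeas (S1 ∩ S2)
      show ∑ i ∈ (S1 ⊔ S2 : Finset (Fin n)), y i = A (S1 ⊔ S2 : Finset (Fin n)).card
      rw [Finset.sup_eq_union]
      linarith
    · intro S hS
      exact (mem_filter.mp hS).2
  have hiT : ∀ (S : Finset (Fin n)), (∑ i ∈ S, y i = A S.card) → S ⊆ T := by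
    intro S hS
    rw [hT]
    have hmem : S ∈ 𝒯 := by
      simp only [h𝒯, mem_filter, mem_univ, true_and]; exact hS
    have := Finset.le_sup (f := id) hmem
    simpa using this
  -- off the maximal tight set, x is at capacity
  have hxd : ∀ i, i ∉ T → x i = d i := by
    intro i hiTm
    by_contra hne
    have hlt : x i < d i := lt_of_le_of_ne (hxF.1 i).2 hne
    have hslack : ∀ S : Finset (Fin n), i ∈ S → 0 < A S.card - ∑ j ∈ S, y j := by
      intro S hiS
      have hle := hyfeas S
      rcases eq_or_lt_of_le hle with heq | hlt2
      · exact absurd (hiT S heq hiS) hiTm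
      · linarith
    set 𝒮 : Finset (Finset (Fin n)) := Finset.univ.filter (fun S => i ∈ S) with h𝒮
    have h𝒮ne : 𝒮.Nonempty := ⟨{i}, by
      simp only [h𝒮, mem_filter, mem_univ, true_and, mem_singleton]⟩
    set ε : ℝ := min (d i - x i) (𝒮.inf' h𝒮ne (fun S => A S.card - ∑ j ∈ S, y j)) with hε
    have hεpos : 0 < ε := by
      refine lt_min (by linarith) ?_
      rw [Finset.lt_inf'_iff]
      intro S hS
      exact hslack S (by simpa [h𝒮] using hS)
    have hεslack : ∀ S : Finset (Fin n), i ∈ S → ε ≤ A S.card - ∑ j ∈ S, y j := by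
      intro S hiS
      exact le_trans (min_le_right _ _) (Finset.inf'_le _ (by simp [h𝒮, hiS]))
    set x' : Fin n → ℝ := Function.update x i (x i + ε) with hx'
    have hx'eq : ∀ j, x' j = x j + (if j = i then ε else 0) := by
      intro j
      by_cases h : j = i
      · subst h; simp [hx']
      · simp [hx', Function.update_of_ne h, h]
    have hx'F : x' ∈ F := by
      constructor
      · intro j
        by_cases h : j = i
        · subst h
          have hxj : x' j = x j + ε := by simp [hx']
          have h1 : ε ≤ d j - x j := min_le_left _ _
          rw [hxj]
          exact ⟨by linarith [(hxF.1 j).1], by linarith⟩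
        · have hxj : x' j = x j := by simp [hx', Function.update_of_ne h]
          rw [hxj]
          exact hxF.1 j
      · intro S
        have hsum : ∑ j ∈ S, (ρ j + x' j)
            = ∑ j ∈ S, (ρ j + x j) + ∑ j ∈ S, (if j = i then ε else 0) := by
          rw [← Finset.sum_add_distrib]
          refine Finset.sum_congr rfl fun j _ => ?_
          rw [hx'eq j]; ring
        rw [hsum, Finset.sum_ite_eq' S i (fun _ => ε)]
        by_cases hiS : i ∈ S
        · rw [if_pos hiS]
          have h1 := hεslack S hiS
          have h2 : ∑ j ∈ S, (ρ j + x j) = ∑ j ∈ S, y j := rfl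
          rw [h2]
          linarith
        · rw [if_neg hiS, add_zero]
          exact hxF.2 S
    have h9 : ∑ j, x' j ≤ ∑ j, x j := hxmax hx'F
    have h10 : ∑ j, x' j = ∑ j, x j + ε := by
      have hsum : ∑ j, x' j = ∑ j, x j + ∑ j, (if j = i then ε else 0) := by
        rw [← Finset.sum_add_distrib]
        refine Finset.sum_congr rfl fun j _ => ?_
        rw [hx'eq j]
      rw [hsum, Finset.sum_ite_eq' Finset.univ i (fun _ => ε), if_pos (mem_univ i)]
    linarith
  -- total value of maximizer
  have hycompl : ∑ i ∈ Tᶜ, y i = ∑ i ∈ Tᶜ, c i := by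
    refine Finset.sum_congr rfl fun i hi => ?_
    have : i ∉ T := Finset.mem_compl.mp hi
    simp [hy, hc, hxd i this]
  have hTcard : T.card ≤ n := by
    have := Finset.card_le_univ T
    simpa using this
  have hVcard : (Finset.univ.filter (fun j : Fin n => T.card ≤ (j : ℕ))).card = n - T.card := by
    have h1 := Finset.card_filter_add_card_filter_not
      (s := (Finset.univ : Finset (Fin n))) (p := fun j : Fin n => (j : ℕ) < T.card)
    have h2 : (Finset.univ.filter (fun j : Fin n => ¬ ((j : ℕ) < T.card)))
        = Finset.univ.filter (fun j : Fin n => T.card ≤ (j : ℕ)) := by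
      ext j; simp only [mem_filter, mem_univ, true_and]; omega
    rw [h2, filt_card T.card hTcard] at h1
    simp only [card_univ, Fintype.card_fin] at h1
    omega
  have hUcard : Tᶜ.card = n - T.card := by
    rw [Finset.card_compl]; simp
  set V : Finset (Fin n) := Finset.univ.filter (fun j : Fin n => T.card ≤ (j : ℕ)) with hV
  have htail : ∑ j ∈ V, c j ≤ ∑ i ∈ Tᶜ, c i := by
    have hsum1 : ∑ i ∈ Tᶜ ∩ V, c i + ∑ i ∈ Tᶜ \ V, c i = ∑ i ∈ Tᶜ, c i :=
      Finset.sum_inter_add_sum_sdiff _ _ _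
    have hsum2 : ∑ i ∈ V ∩ Tᶜ, c i + ∑ i ∈ V \ Tᶜ, c i = ∑ i ∈ V, c i :=
      Finset.sum_inter_add_sum_sdiff _ _ _
    rw [Finset.inter_comm] at hsum2
    have hc1 := Finset.card_sdiff_add_card_inter Tᶜ V
    have hc2 := Finset.card_sdiff_add_card_inter V Tᶜ
    rw [Finset.inter_comm] at hc2
    have hcards : (Tᶜ \ V).card = (V \ Tᶜ).card := by omega
    by_cases hVU : (V \ Tᶜ) = ∅
    · have hnn : 0 ≤ ∑ i ∈ Tᶜ \ V, c i :=
        Finset.sum_nonneg fun i _ => add_nonneg (hρ0 i) (hd i)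
      rw [hVU] at hsum2
      simp only [Finset.sum_empty, add_zero] at hsum2
      linarith
    · obtain ⟨j₀, hj₀⟩ := Finset.nonempty_iff_ne_empty.mpr hVU
      have hj₀V : T.card ≤ (j₀ : ℕ) := by
        have := (Finset.mem_sdiff.mp hj₀).1
        simpa [hV] using this
      have hm : T.card < n := lt_of_le_of_lt hj₀V j₀.isLt
      set w : Fin n := ⟨T.card, hm⟩ with hw
      have hup : ∀ j ∈ V \ Tᶜ, c j ≤ c w := by
        intro j hj
        have hjV : T.card ≤ (j : ℕ) := by
          have := (Finset.mem_sdiff.mp hj).1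
          simpa [hV] using this
        exact hsorted w j hjV
      have hdown : ∀ i ∈ Tᶜ \ V, c w ≤ c i := by
        intro i hi
        have hiV : ¬ (T.card ≤ (i : ℕ)) := by
          have := (Finset.mem_sdiff.mp hi).2
          simpa [hV] using this
        exact hsorted i w (by show (i : ℕ) ≤ T.card; omega)
      have e1 : ∑ j ∈ V \ Tᶜ, c j ≤ (V \ Tᶜ).card • c w :=
        Finset.sum_le_card_nsmul _ _ _ hup
      have e2 : (Tᶜ \ V).card • c w ≤ ∑ i ∈ Tᶜ \ V, c i :=
        Finset.card_nsmul_le_sum _ _ _ hdown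
      rw [hcards] at e2
      linarith
  have hfinal : Z n ≤ ∑ i, y i := by
    have h1 := hZtail T.card hTcard
    have h2 : ∑ i ∈ T, y i + ∑ i ∈ Tᶜ, y i = ∑ i, y i := Finset.sum_add_sum_compl T y
    rw [hycompl, hTtight] at h2
    linarith
  have hub' : ∑ i, y i ≤ Z n := hub x hxF.1 hxF.2
  have hyx : ∑ i, y i = ∑ i, ρ i + ∑ i, x i := by
    rw [← Finset.sum_add_distrib]
  have hZn : Z n = ∑ i, z i := by
    simp only [hZ]
    rw [filt_full le_rfl]
  constructor
  · refine ⟨x, hxF.1, fun S => by simpa only [hA] using hxF.2 S, ?_⟩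
    have : ∑ i, y i = Z n := le_antisymm hub' hfinal
    rw [hyx, hZn] at this
    linarith
  · rintro s ⟨x', hb', hS', rfl⟩
    have hfeas' : ∀ S : Finset (Fin n), ∑ i ∈ S, (ρ i + x' i) ≤ A S.card := by
      intro S
      simpa only [hA] using hS' S
    have h1 := hub x' hb' hfeas'
    have h2 : ∑ i, (ρ i + x' i) = ∑ i, ρ i + ∑ i, x' i := by
      rw [← Finset.sum_add_distrib]
    rw [← hZn]
    linarith
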